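/- Let Γ : ℝⁿ × ℝⁿ × (0,∞) → [0,∞) be measurable, satisfying (K1) and the pointwise bound Γ(x,y,t) ≤ D t^{−(n+α)/2} for all x, y ∈ ℝⁿ and t > 0 (with D depending only on n and α). Then for every φ ∈ L^q(w) and every 1 ≤ q ≤ r ≤ ∞, ‖S(t)φw‖_{L^r(w)} ≤ c₁ t^{−((n+α)/2)(1/q − 1/r)} ‖φ‖_{L^q(w)} for all t > 0, where c₁ depends only on n and α. -/

import Mathlib

open MeasureTheory Metric Set

/-- Case (A) or case (B) of the paper: the weight is `w(x) = |x₁|^α` with `0 ≤ α < 1`,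
or `w(x) = |x|^α` with `0 ≤ α < n`. -/
def CaseAB (n : ℕ) (hn : 0 < n) (α : ℝ) (w : EuclideanSpace ℝ (Fin n) → ℝ) : Prop :=
  (0 ≤ α ∧ α < 1 ∧ ∀ x, w x = |x ⟨0, hn⟩| ^ α) ∨
  (0 ≤ α ∧ (α : ℝ) < n ∧ ∀ x, w x = ‖x‖ ^ α)

/-- The measure `w(x) dx` on `ℝⁿ`. -/
noncomputable def wMeas (n : ℕ) (w : EuclideanSpace ℝ (Fin n) → ℝ) :
    Measure (EuclideanSpace ℝ (Fin n)) :=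
  volume.withDensity fun x => ENNReal.ofReal (w x)

/-- `[S(t)φw](x) = ∫ Γ(x,y,t) φ(y) w(y) dy`. -/
noncomputable def Sop {n : ℕ} (μ : Measure (EuclideanSpace ℝ (Fin n)))
    (Γ : EuclideanSpace ℝ (Fin n) → EuclideanSpace ℝ (Fin n) → ℝ → ℝ)
    (φ : EuclideanSpace ℝ (Fin n) → ℝ) (t : ℝ) (x : EuclideanSpace ℝ (Fin n)) : ℝ :=
  ∫ y, Γ x y t * φ y ∂μ

/-- Property (K1): `∫ Γ(x,y,t) w(x) dx = ∫ Γ(x,y,t) w(y) dy = 1` for all `x, y, t > 0`. -/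
def PropK1 {n : ℕ} (w : EuclideanSpace ℝ (Fin n) → ℝ)
    (Γ : EuclideanSpace ℝ (Fin n) → EuclideanSpace ℝ (Fin n) → ℝ → ℝ) : Prop :=
  ∀ (x y : EuclideanSpace ℝ (Fin n)) (t : ℝ), 0 < t →
    (∫⁻ z, ENNReal.ofReal (Γ z y t * w z)) = 1 ∧ (∫⁻ z, ENNReal.ofReal (Γ x z t * w z)) = 1

lemma jensen_pow {X : Type*} [MeasurableSpace X] (μ : Measure X) (h g : X → ENNReal)
    (hh : AEMeasurable h μ) (hg : AEMeasurable g μ) (hint : ∫⁻ x, h x ∂μ = 1)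
    {p : ℝ} (hp : 1 ≤ p) :
    (∫⁻ x, h x * g x ∂μ) ^ p ≤ ∫⁻ x, h x * g x ^ p ∂μ := by
  rcases eq_or_lt_of_le hp with hp1 | hp1
  · simp [← hp1]
  have hp0 : (0:ℝ) < p := lt_trans one_pos hp1
  set c : ℝ := p.conjExponent with hc
  have hconj : c.HolderConjugate p := (Real.HolderConjugate.conjExponent hp1).symm
  have hc0 : (0:ℝ) < c := hconj.pos
  have key := ENNReal.lintegral_mul_le_Lp_mul_Lq μ hconj
      (f := fun x => h x ^ c⁻¹) (g := fun x => h x ^ p⁻¹ * g x)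
      ((hh.pow_const _)) ((hh.pow_const _).mul hg)
  have e1 : ∀ x, h x ^ c⁻¹ * (h x ^ p⁻¹ * g x) = h x * g x := by
    intro x
    rw [← mul_assoc, ← ENNReal.rpow_add_of_nonneg _ _ (by positivity) (by positivity),
      hconj.inv_add_inv_eq_one, ENNReal.rpow_one]
  have e2 : ∀ x, (h x ^ c⁻¹) ^ c = h x := by
    intro x
    rw [← ENNReal.rpow_mul, inv_mul_cancel₀ hc0.ne', ENNReal.rpow_one]
  have e3 : ∀ x, (h x ^ p⁻¹ * g x) ^ p = h x * g x ^ p := by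
    intro x
    rw [ENNReal.mul_rpow_of_nonneg _ _ hp0.le, ← ENNReal.rpow_mul,
      inv_mul_cancel₀ hp0.ne', ENNReal.rpow_one]
  simp only [Pi.mul_apply, e1, e2, e3, hint, ENNReal.one_rpow, one_mul] at key
  calc (∫⁻ x, h x * g x ∂μ) ^ p
      ≤ ((∫⁻ x, h x * g x ^ p ∂μ) ^ (1 / p)) ^ p := ENNReal.rpow_le_rpow key hp0.le
    _ = ∫⁻ x, h x * g x ^ p ∂μ := by
        rw [← ENNReal.rpow_mul, one_div, inv_mul_cancel₀ hp0.ne', ENNReal.rpow_one]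

lemma Mbound_aux {D t s θ : ℝ} (hD : 0 < D) (ht : 0 < t) (hθ0 : 0 ≤ θ) (hθ1 : θ ≤ 1) :
    ENNReal.ofReal (D * t ^ s) ^ θ ≤ ENNReal.ofReal (max D 1 * t ^ (s * θ)) := by
  rw [ENNReal.ofReal_rpow_of_nonneg (by positivity) hθ0]
  apply ENNReal.ofReal_le_ofReal
  rw [Real.mul_rpow hD.le (Real.rpow_nonneg ht.le s), Real.rpow_mul ht.le]
  have hDθ : D ^ θ ≤ max D 1 := by
    rcases le_total D 1 with h | h
    · exact le_max_of_le_right (Real.rpow_le_one hD.le h hθ0)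
    · exact le_max_of_le_left ((Real.rpow_le_rpow_of_exponent_le h hθ1).trans_eq
        (Real.rpow_one D))
  exact mul_le_mul_of_nonneg_right hDθ (Real.rpow_nonneg (Real.rpow_nonneg ht.le s) θ)

/-- Lemma 2.3: in case (A) or (B), if `Γ ≥ 0` is measurable, satisfies (K1) and the bound
`Γ(x,y,t) ≤ D t^{-(n+α)/2}`, then for `φ ∈ L^q(w)` and `1 ≤ q ≤ r ≤ ∞`,
`‖S(t)φw‖_{L^r(w)} ≤ c₁ t^{-((n+α)/2)(1/q-1/r)} ‖φ‖_{L^q(w)}` for all `t > 0`, where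
`c₁` depends only on `n`, `α` (and `D`). -/
theorem stmt_8 (n : ℕ) (hn : 0 < n) (α : ℝ) (w : EuclideanSpace ℝ (Fin n) → ℝ)
    (hw : CaseAB n hn α w) (D : ℝ) (hD : 0 < D) :
    ∃ c₁ : ℝ, 0 < c₁ ∧
      ∀ Γ : EuclideanSpace ℝ (Fin n) → EuclideanSpace ℝ (Fin n) → ℝ → ℝ,
        Measurable (fun q : (EuclideanSpace ℝ (Fin n)) × (EuclideanSpace ℝ (Fin n)) × ℝ =>
          Γ q.1 q.2.1 q.2.2) →
        (∀ x y t, 0 ≤ Γ x y t) → PropK1 w Γ →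
        (∀ (x y : EuclideanSpace ℝ (Fin n)) (t : ℝ), 0 < t →
          Γ x y t ≤ D * t ^ (-((n : ℝ) + α) / 2)) →
        ∀ q r : ENNReal, 1 ≤ q → q ≤ r →
          ∀ φ : EuclideanSpace ℝ (Fin n) → ℝ, MemLp φ q (wMeas n w) →
            ∀ t : ℝ, 0 < t →
              eLpNorm (Sop (wMeas n w) Γ φ t) r (wMeas n w) ≤
                ENNReal.ofReal (c₁ * t ^ (-(((n : ℝ) + α) / 2) * (q⁻¹.toReal - r⁻¹.toReal))) *
                  eLpNorm φ q (wMeas n w) := by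
  classical
  -- measurability and nonnegativity of the weight
  have hwm : Measurable w := by
    rcases hw with ⟨_, _, h⟩ | ⟨_, _, h⟩
    · have : w = fun x => |x ⟨0, hn⟩| ^ α := funext h
      rw [this]
      exact ((EuclideanSpace.proj (⟨0, hn⟩ : Fin n)).continuous.measurable.abs).pow_const α
    · have : w = fun x => ‖x‖ ^ α := funext h
      rw [this]
      exact measurable_norm.pow_const α
  have hw0 : ∀ x, 0 ≤ w x := by
    rcases hw with ⟨_, _, h⟩ | ⟨_, _, h⟩
    · intro x; rw [h x]; positivity
    · intro x; rw [h x]; positivity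
  refine ⟨max D 1, lt_of_lt_of_le one_pos (le_max_right _ _), ?_⟩
  intro Γ hΓm hΓ0 hK1 hΓb q r hq hqr φ hφ t ht
  set μ := wMeas n w with hμdef
  set W : EuclideanSpace ℝ (Fin n) → ENNReal := fun x => ENNReal.ofReal (w x) with hWdef
  have hWm : Measurable W := ENNReal.measurable_ofReal.comp hwm
  have hWlt : ∀ᵐ x ∂(volume : Measure (EuclideanSpace ℝ (Fin n))), W x < ⊤ := ae_of_all _ fun x => ENNReal.ofReal_lt_top
  have hWtop : ∀ x, W x ≠ ⊤ := fun x => ENNReal.ofReal_ne_top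
  set K : EuclideanSpace ℝ (Fin n) → EuclideanSpace ℝ (Fin n) → ENNReal := fun x y => ENNReal.ofReal (Γ x y t) with hKdef
  have hKm : Measurable (fun p : (EuclideanSpace ℝ (Fin n)) × (EuclideanSpace ℝ (Fin n)) => K p.1 p.2) :=
    ENNReal.measurable_ofReal.comp (hΓm.comp
      (measurable_fst.prodMk (measurable_snd.prodMk measurable_const)))
  have hKx : ∀ x, Measurable (K x) := fun x => hKm.comp measurable_prodMk_left
  have hK1x : ∀ y, (∫⁻ x, K x y * W x) = 1 := by
    intro y
    have := (hK1 y y t ht).1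
    simpa only [ENNReal.ofReal_mul (hΓ0 _ _ _)] using this
  have hK1y : ∀ x, (∫⁻ y, K x y * W y) = 1 := by
    intro x
    have := (hK1 x x t ht).2
    simpa only [ENNReal.ofReal_mul (hΓ0 _ _ _)] using this
  set Mr : ℝ := D * t ^ (-((n : ℝ) + α) / 2) with hMrdef
  have hMrpos : 0 < Mr := mul_pos hD (Real.rpow_pos_of_pos ht _)
  set M : ENNReal := ENNReal.ofReal Mr with hMdef
  have hKleM : ∀ x y, K x y ≤ M := fun x y => ENNReal.ofReal_le_ofReal (hΓb x y t ht)
  have hMtop : M ≠ ⊤ := ENNReal.ofReal_ne_top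
  have hMbound : ∀ θ : ℝ, 0 ≤ θ → θ ≤ 1 →
      M ^ θ ≤ ENNReal.ofReal (max D 1 * t ^ (-(((n : ℝ) + α) / 2) * θ)) := by
    intro θ hθ0 hθ1
    have := Mbound_aux (s := -((n : ℝ) + α) / 2) hD ht hθ0 hθ1
    simpa only [← neg_div] using this
  -- replace φ by a strongly measurable representative
  obtain ⟨ψ, hψsm, hφψ⟩ := hφ.1
  have hψm : Measurable ψ := hψsm.measurable
  have hψLp : MemLp ψ q μ := hφ.ae_eq hφψ
  have hSeq : Sop μ Γ φ t = Sop μ Γ ψ t := by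
    funext x
    exact integral_congr_ae (hφψ.mono fun y hy => by simp only [hy])
  rw [hSeq, eLpNorm_congr_ae hφψ]
  set Nq := eLpNorm ψ q μ with hNqdef
  set g : EuclideanSpace ℝ (Fin n) → ENNReal := fun y => (‖ψ y‖₊ : ENNReal) with hgdef
  have hgm : Measurable g := hψm.enorm
  -- the pointwise majorant
  set A : EuclideanSpace ℝ (Fin n) → ENNReal := fun x => ∫⁻ y, (K x y * W y) * g y with hAdef
  have h1 : ∀ x, (‖Sop μ Γ ψ t x‖₊ : ENNReal) ≤ A x := by
    intro x
    calc (‖∫ y, Γ x y t * ψ y ∂μ‖₊ : ENNReal)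
        ≤ ∫⁻ y, ‖Γ x y t * ψ y‖₊ ∂μ := enorm_integral_le_lintegral_enorm _
      _ = ∫⁻ y, W y * ((K x y) * g y) := by
          rw [hμdef, wMeas, lintegral_withDensity_eq_lintegral_mul_non_measurable _ hWm hWlt]
          refine lintegral_congr fun y => ?_
          simp only [Pi.mul_apply, nnnorm_mul, ENNReal.coe_mul, ← enorm_eq_nnnorm,
            Real.enorm_eq_ofReal (hΓ0 x y t)] <;> rfl
      _ = A x := by
          refine lintegral_congr fun y => ?_
          ring
  have hq0 : q ≠ 0 := fun h => by simp [h] at hq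
  rcases eq_or_ne q ⊤ with hqt | hqt
  · -- q = r = ∞
    have hrt : r = ⊤ := top_le_iff.mp (hqt ▸ hqr)
    subst hqt hrt
    have hgN : ∀ᵐ y ∂μ, g y ≤ Nq := by
      have := enorm_ae_le_eLpNormEssSup ψ μ
      rw [hNqdef, eLpNorm_exponent_top]
      exact this
    have hgN' : ∀ᵐ y ∂(volume : Measure (EuclideanSpace ℝ (Fin n))), W y ≠ 0 → g y ≤ Nq := by
      rw [← ae_withDensity_iff hWm]
      exact hgN
    have h4 : ∀ x, A x ≤ Nq := by
      intro x
      calc A x ≤ ∫⁻ y, (K x y * W y) * Nq := by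
            refine lintegral_mono_ae (hgN'.mono fun y hy => ?_)
            rcases eq_or_ne (W y) 0 with h0 | h0
            · simp [h0]
            · exact mul_le_mul_right (hy h0) _
        _ = Nq * ∫⁻ y, K x y * W y := by
            rw [← lintegral_const_mul' _ _ hψLp.2.ne]
            exact lintegral_congr fun y => by ring
        _ = Nq := by rw [hK1y x, mul_one]
    have hLHS : eLpNorm (Sop μ Γ ψ t) ⊤ μ ≤ Nq := by
      rw [eLpNorm_exponent_top]
      exact essSup_le_of_ae_le _ (ae_of_all _ fun x => (h1 x).trans (h4 x))
    have hRHS : (1 : ENNReal) ≤ ENNReal.ofReal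
        (max D 1 * t ^ (-(((n : ℝ) + α) / 2) * ((⊤ : ENNReal)⁻¹.toReal - (⊤ : ENNReal)⁻¹.toReal))) := by
      simp only [ENNReal.inv_top, ENNReal.toReal_zero, sub_self, mul_zero, Real.rpow_zero, mul_one]
      exact ENNReal.one_le_ofReal.mpr (le_max_right D 1)
    exact hLHS.trans (le_mul_of_one_le_left zero_le hRHS)
  · -- q finite
    set qr : ℝ := q.toReal with hqrdef
    have hq1 : 1 ≤ qr := by
      have := ENNReal.toReal_mono hqt hq
      simpa using this
    have hqr0 : 0 < qr := lt_of_lt_of_le one_pos hq1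
    have h2 : ∀ x, A x ^ qr ≤ ∫⁻ y, (K x y * W y) * g y ^ qr := fun x =>
      jensen_pow volume (fun y => K x y * W y) g ((hKx x).mul hWm).aemeasurable
        hgm.aemeasurable (hK1y x) hq1
    set I : ENNReal := ∫⁻ y, W y * g y ^ qr with hIdef
    have hNqI : Nq ^ qr = I := by
      rw [hNqdef, eLpNorm_eq_lintegral_rpow_enorm_toReal hq0 hqt, ← hqrdef, hμdef, wMeas,
        lintegral_withDensity_eq_lintegral_mul_non_measurable _ hWm hWlt,
        ← ENNReal.rpow_mul, one_div, inv_mul_cancel₀ hqr0.ne', ENNReal.rpow_one]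
      rfl
    have hgfin : ∀ y, g y ^ qr ≠ ⊤ := fun y =>
      ENNReal.rpow_ne_top_of_nonneg hqr0.le ENNReal.coe_ne_top
    have h3 : ∫⁻ x, A x ^ qr ∂μ ≤ I := by
      have swapmeas : AEMeasurable
          (fun z : (EuclideanSpace ℝ (Fin n)) × (EuclideanSpace ℝ (Fin n)) =>
            W z.1 * ((K z.1 z.2 * W z.2) * g z.2 ^ qr))
          ((volume : Measure (EuclideanSpace ℝ (Fin n))).prod volume) :=
        ((hWm.comp measurable_fst).mul ((hKm.mul (hWm.comp measurable_snd)).mul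
          ((hgm.comp measurable_snd).pow_const qr))).aemeasurable
      calc ∫⁻ x, A x ^ qr ∂μ
          = ∫⁻ x, W x * A x ^ qr := by
            rw [hμdef, wMeas, lintegral_withDensity_eq_lintegral_mul_non_measurable _ hWm hWlt]
            rfl
        _ ≤ ∫⁻ x, W x * ∫⁻ y, (K x y * W y) * g y ^ qr :=
            lintegral_mono fun x => mul_le_mul_right (h2 x) _
        _ = ∫⁻ x, ∫⁻ y, W x * ((K x y * W y) * g y ^ qr) := by
            exact lintegral_congr fun x => (lintegral_const_mul' _ _ (hWtop x)).symm
        _ = ∫⁻ y, ∫⁻ x, W x * ((K x y * W y) * g y ^ qr) := lintegral_lintegral_swap swapmeas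
        _ = ∫⁻ y, (W y * g y ^ qr) * ∫⁻ x, K x y * W x := by
            refine lintegral_congr fun y => ?_
            rw [← lintegral_const_mul' _ _ (ENNReal.mul_ne_top (hWtop y) (hgfin y))]
            exact lintegral_congr fun x => by ring
        _ = I := by
            refine lintegral_congr fun y => ?_
            rw [hK1x y, mul_one]
    have h4 : ∀ x, A x ≤ M ^ qr⁻¹ * Nq := by
      intro x
      have e0 : A x = (A x ^ qr) ^ qr⁻¹ := by
        rw [← ENNReal.rpow_mul, mul_inv_cancel₀ hqr0.ne', ENNReal.rpow_one]
      have e1 : (∫⁻ y, (K x y * W y) * g y ^ qr) ≤ M * I := by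
        rw [← lintegral_const_mul' _ _ hMtop]
        refine lintegral_mono fun y => ?_
        calc (K x y * W y) * g y ^ qr ≤ (M * W y) * g y ^ qr :=
              mul_le_mul_left (mul_le_mul_left (hKleM x y) _) _
          _ = M * (W y * g y ^ qr) := by ring
      calc A x = (A x ^ qr) ^ qr⁻¹ := e0
        _ ≤ (M * I) ^ qr⁻¹ := ENNReal.rpow_le_rpow ((h2 x).trans e1) (by positivity)
        _ = M ^ qr⁻¹ * I ^ qr⁻¹ := ENNReal.mul_rpow_of_nonneg _ _ (by positivity)
        _ = M ^ qr⁻¹ * Nq := by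
            rw [← hNqI, ← ENNReal.rpow_mul, mul_inv_cancel₀ hqr0.ne', ENNReal.rpow_one]
    have hqinv1 : qr⁻¹ ≤ 1 := by
      rw [inv_le_one₀ hqr0]; exact hq1
    have htoq : q⁻¹.toReal = qr⁻¹ := by rw [ENNReal.toReal_inv]
    rcases eq_or_ne r ⊤ with hrt | hrt
    · subst hrt
      have hLHS : eLpNorm (Sop μ Γ ψ t) ⊤ μ ≤ M ^ qr⁻¹ * Nq := by
        rw [eLpNorm_exponent_top]
        exact essSup_le_of_ae_le _ (ae_of_all _ fun x => (h1 x).trans (h4 x))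
      refine hLHS.trans (mul_le_mul_left ?_ Nq)
      have := hMbound qr⁻¹ (by positivity) hqinv1
      simpa only [ENNReal.inv_top, ENNReal.toReal_zero, sub_zero, htoq] using this
    · -- main case : q ≤ r < ∞
      set rr : ℝ := r.toReal with hrrdef
      have hr0 : r ≠ 0 := fun h => by simp [h] at hqr; exact hq0 hqr
      have hqrr : qr ≤ rr := ENNReal.toReal_mono hrt hqr
      have hrr0 : 0 < rr := lt_of_lt_of_le hqr0 hqrr
      have hsub0 : 0 ≤ rr - qr := sub_nonneg.mpr hqrr
      rcases eq_or_ne Nq 0 with hN0 | hN0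
      · have hψ0 : ψ =ᵐ[μ] 0 := (eLpNorm_eq_zero_iff hψsm.aestronglyMeasurable hq0).1 hN0
        have hS0 : Sop μ Γ ψ t = (fun _ => (0 : ℝ)) := by
          funext x
          rw [Sop]
          exact integral_eq_zero_of_ae (hψ0.mono fun y hy => by simp [hy])
        rw [hS0]
        simp only [eLpNorm_zero']
        exact zero_le
      · have hNt : Nq ≠ ⊤ := hψLp.2.ne
        have hCfin : M ^ qr⁻¹ * Nq ≠ ⊤ :=
          ENNReal.mul_ne_top (ENNReal.rpow_ne_top_of_nonneg (by positivity) hMtop) hNt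
        have key : (∫⁻ x, (‖Sop μ Γ ψ t x‖₊ : ENNReal) ^ rr ∂μ) ≤
            (M ^ qr⁻¹ * Nq) ^ (rr - qr) * Nq ^ qr := by
          calc (∫⁻ x, (‖Sop μ Γ ψ t x‖₊ : ENNReal) ^ rr ∂μ)
              ≤ ∫⁻ x, A x ^ rr ∂μ :=
                lintegral_mono fun x => ENNReal.rpow_le_rpow (h1 x) hrr0.le
            _ ≤ ∫⁻ x, (M ^ qr⁻¹ * Nq) ^ (rr - qr) * A x ^ qr ∂μ := by
                refine lintegral_mono fun x => ?_
                have e : A x ^ rr = A x ^ (rr - qr) * A x ^ qr := by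
                  rw [← ENNReal.rpow_add_of_nonneg _ _ hsub0 hqr0.le, sub_add_cancel]
                rw [e]
                exact mul_le_mul_left (ENNReal.rpow_le_rpow (h4 x) hsub0) _
            _ = (M ^ qr⁻¹ * Nq) ^ (rr - qr) * ∫⁻ x, A x ^ qr ∂μ :=
                lintegral_const_mul' _ _ (ENNReal.rpow_ne_top_of_nonneg hsub0 hCfin)
            _ ≤ (M ^ qr⁻¹ * Nq) ^ (rr - qr) * I := mul_le_mul_right h3 _
            _ = (M ^ qr⁻¹ * Nq) ^ (rr - qr) * Nq ^ qr := by rw [hNqI]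
        have hexp : qr⁻¹ * ((rr - qr) * rr⁻¹) = qr⁻¹ - rr⁻¹ := by
          field_simp
        have hfinal : ((M ^ qr⁻¹ * Nq) ^ (rr - qr) * Nq ^ qr) ^ rr⁻¹ =
            M ^ (qr⁻¹ - rr⁻¹) * Nq := by
          rw [ENNReal.mul_rpow_of_nonneg _ _ hsub0, mul_assoc,
            ← ENNReal.rpow_add _ _ hN0 hNt, sub_add_cancel,
            ENNReal.mul_rpow_of_nonneg _ _ (by positivity : (0:ℝ) ≤ rr⁻¹),
            ← ENNReal.rpow_mul Nq, mul_inv_cancel₀ hrr0.ne', ENNReal.rpow_one,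
            ← ENNReal.rpow_mul (M ^ qr⁻¹), ← ENNReal.rpow_mul M, hexp]
        have hθ0 : 0 ≤ qr⁻¹ - rr⁻¹ := by
          have : rr⁻¹ ≤ qr⁻¹ := by
            rw [inv_le_inv₀ hrr0 hqr0]
            exact hqrr
          linarith
        have hθ1 : qr⁻¹ - rr⁻¹ ≤ 1 :=
          le_trans (sub_le_self _ (by positivity)) hqinv1
        have htor : r⁻¹.toReal = rr⁻¹ := by rw [ENNReal.toReal_inv]
        calc eLpNorm (Sop μ Γ ψ t) r μ
            = (∫⁻ x, (‖Sop μ Γ ψ t x‖₊ : ENNReal) ^ rr ∂μ) ^ rr⁻¹ := by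
              rw [eLpNorm_eq_lintegral_rpow_enorm_toReal hr0 hrt, one_div]
              rfl
          _ ≤ ((M ^ qr⁻¹ * Nq) ^ (rr - qr) * Nq ^ qr) ^ rr⁻¹ :=
              ENNReal.rpow_le_rpow key (by positivity)
          _ = M ^ (qr⁻¹ - rr⁻¹) * Nq := hfinal
          _ ≤ ENNReal.ofReal
                (max D 1 * t ^ (-(((n : ℝ) + α) / 2) * (q⁻¹.toReal - r⁻¹.toReal))) * Nq := by
              rw [htoq, htor]
              exact mul_le_mul_left (hMbound _ hθ0 hθ1) Nq
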